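/- Fix d ≥ 1 and a graph H on a vertex set V of size n with maximum degree at most d. Fix reals 0 < δ ≤ a ≤ 1/2 and k ∈ ℕ. Then the number of k-element subsets S ⊆ V with e(H[S]) ≥ a·k·d is at most (2e/δ²)^k · (n/k)^{k - (1-δ)·a·k}. -/

import Mathlib

open Finset

private lemma stmt16_rank_ssub {α β : Type*} [LinearOrder β] [DecidableEq α] (g : α → β)
    (Q : Finset α) {v w : α} (hv : v ∈ Q) (hlt : g v < g w) :
    (Q.filter fun x => g x < g v) ⊂ (Q.filter fun x => g x < g w) := by
  refine ⟨Finset.monotone_filter_right Q (fun x _ hx => lt_trans hx hlt), fun hsub => ?_⟩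
  have := hsub (Finset.mem_filter.mpr ⟨hv, hlt⟩)
  exact absurd (Finset.mem_filter.mp this).2 (lt_irrefl _)

private lemma stmt16_rank_inj {α β : Type*} [LinearOrder β] [DecidableEq α] (g : α → β)
    (hg : Function.Injective g) (Q : Finset α) {v w : α} (hv : v ∈ Q) (hw : w ∈ Q)
    (h : (Q.filter fun x => g x < g v).card = (Q.filter fun x => g x < g w).card) : v = w := by
  rcases lt_trichotomy (g v) (g w) with hlt | heq | hlt
  · exact absurd h (Nat.ne_of_lt (Finset.card_lt_card (stmt16_rank_ssub g Q hv hlt)))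
  · exact hg heq
  · exact absurd h.symm (Nat.ne_of_lt (Finset.card_lt_card (stmt16_rank_ssub g Q hw hlt)))

private lemma stmt16_pow_le_fact (k : ℕ) : (k : ℝ) ^ k ≤ (k.factorial : ℝ) * Real.exp 1 ^ k := by
  have h := Real.sum_le_exp_of_nonneg (x := (k : ℝ)) (by positivity) (k + 1)
  have hterm : (k : ℝ) ^ k / k.factorial ≤ Real.exp k := by
    refine le_trans ?_ h
    exact Finset.single_le_sum (f := fun i => (k:ℝ) ^ i / i.factorial)
      (fun i _ => by positivity) (Finset.mem_range.mpr (Nat.lt_succ_self k))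
  rw [div_le_iff₀ (by positivity)] at hterm
  calc (k:ℝ) ^ k ≤ Real.exp k * k.factorial := hterm
    _ = (k.factorial : ℝ) * Real.exp 1 ^ k := by rw [Real.exp_one_pow]; ring

section Stmt16Aux
set_option linter.unusedSectionVars false
variable {V : Type*} [Fintype V] [DecidableEq V] (H : SimpleGraph V) [DecidableRel H.Adj] {k d c : ℕ}

private def stmt16_bdeg (f : Fin k → V) (i : Fin k) : ℕ :=
  (univ.filter fun j => j < i ∧ H.Adj (f j) (f i)).card

private def stmt16_pool (c : ℕ) (f : Fin k → V) (i : Fin k) : Finset V :=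
  univ.filter fun v => c ≤ (univ.filter fun j => j < i ∧ H.Adj (f j) v).card

private lemma stmt16_mem_pool {c : ℕ} {f : Fin k → V} {i : Fin k} (h : c ≤ stmt16_bdeg H f i) :
    f i ∈ stmt16_pool H c f i := by
  simpa [stmt16_pool, stmt16_bdeg] using h

private lemma stmt16_pool_congr {c : ℕ} {f g : Fin k → V} {i : Fin k}
    (h : ∀ j, j < i → f j = g j) : stmt16_pool H c f i = stmt16_pool H c g i := by
  unfold stmt16_pool
  have hv : ∀ v : V, (univ.filter fun j => j < i ∧ H.Adj (f j) v)
      = (univ.filter fun j => j < i ∧ H.Adj (g j) v) := by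
    intro v
    apply Finset.filter_congr
    intro j _
    by_cases hj : j < i
    · simp [hj, h j hj]
    · simp [hj]
  simp only [hv]

private lemma stmt16_nbr_card_le (hdeg : ∀ v, (H.neighborSet v).ncard ≤ d) (w : V) :
    (univ.filter fun v => H.Adj w v).card ≤ d := by
  have hfin : (H.neighborSet w).Finite := Set.toFinite _
  refine le_trans (Finset.card_le_card (t := hfin.toFinset) ?_) ?_
  · intro v hv
    simp only [Finset.mem_filter] at hv
    simpa [Set.Finite.mem_toFinset, SimpleGraph.mem_neighborSet] using hv.2
  · rw [← Set.ncard_eq_toFinset_card (H.neighborSet w) hfin]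
    exact hdeg w

private lemma stmt16_bdeg_le (hdeg : ∀ v, (H.neighborSet v).ncard ≤ d) {f : Fin k → V}
    (hf : Function.Injective f) (i : Fin k) : stmt16_bdeg H f i ≤ d := by
  have h1 : stmt16_bdeg H f i = ((univ.filter fun j => j < i ∧ H.Adj (f j) (f i)).image f).card := by
    rw [Finset.card_image_of_injective _ hf]; rfl
  rw [h1]
  refine le_trans (Finset.card_le_card ?_) (stmt16_nbr_card_le H hdeg (f i))
  intro v hv
  simp only [Finset.mem_image, Finset.mem_filter] at hv
  obtain ⟨j, ⟨_, _, hadj⟩, rfl⟩ := hv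
  simp [hadj.symm]

private lemma stmt16_pool_card_le (hdeg : ∀ v, (H.neighborSet v).ncard ≤ d) (hc : 0 < c)
    (f : Fin k → V) (i : Fin k) : (stmt16_pool H c f i).card ≤ k * d / c := by
  rw [Nat.le_div_iff_mul_le hc]
  have h1 : (stmt16_pool H c f i).card * c ≤
      ∑ v ∈ stmt16_pool H c f i, (univ.filter fun j => j < i ∧ H.Adj (f j) v).card := by
    simpa [mul_comm] using Finset.card_nsmul_le_sum (stmt16_pool H c f i)
      (fun v => (univ.filter fun j => j < i ∧ H.Adj (f j) v).card) c
      (fun v hv => (Finset.mem_filter.mp hv).2)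
  refine le_trans h1 (le_trans (Finset.sum_le_sum_of_subset (Finset.subset_univ _)) ?_)
  have h2 : ∑ v : V, (univ.filter fun j => j < i ∧ H.Adj (f j) v).card
      = ∑ j : Fin k, (univ.filter fun v => j < i ∧ H.Adj (f j) v).card := by
    simp only [Finset.card_filter]
    exact Finset.sum_comm
  rw [h2]
  have h3 : ∀ j : Fin k, (univ.filter fun v => j < i ∧ H.Adj (f j) v).card ≤ d := by
    intro j
    by_cases hj : j < i
    · simpa [hj] using stmt16_nbr_card_le H hdeg (f j)
    · simp [hj]
  calc ∑ j : Fin k, (univ.filter fun v => j < i ∧ H.Adj (f j) v).card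
      ≤ ∑ _j : Fin k, d := Finset.sum_le_sum (fun j _ => h3 j)
    _ = k * d := by simp [mul_comm]

private lemma stmt16_edges_le (f : Fin k → V) (hk : 0 < k) :
    (H.induce (↑(univ.image f) : Set V)).edgeSet.ncard ≤ ∑ i : Fin k, stmt16_bdeg H f i := by
  haveI : Nonempty (Fin k) := ⟨⟨0, hk⟩⟩
  set S : Finset V := univ.image f with hS
  set T : Finset ((_ : Fin k) × Fin k) :=
    univ.sigma (fun i : Fin k => univ.filter fun j => j < i ∧ H.Adj (f j) (f i)) with hT
  have hsum : T.card = ∑ i : Fin k, stmt16_bdeg H f i := Finset.card_sigma _ _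
  set ι : ↥(↑S : Set V) → Fin k := fun x => Function.invFun f ↑x with hιdef
  have hι : ∀ x : ↥(↑S : Set V), f (ι x) = ↑x := by
    intro x
    apply Function.invFun_eq
    have hx : (↑x : V) ∈ univ.image f := x.2
    rw [Finset.mem_image] at hx
    obtain ⟨j, _, hj⟩ := hx
    exact ⟨j, hj⟩
  have hpair : ∀ x y : ↥(↑S : Set V),
      (if ι x ≤ ι y then (⟨ι y, ι x⟩ : (_ : Fin k) × Fin k) else ⟨ι x, ι y⟩)
      = if ι y ≤ ι x then (⟨ι x, ι y⟩ : (_ : Fin k) × Fin k) else ⟨ι y, ι x⟩ := by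
    intro x y
    rcases lt_trichotomy (ι x) (ι y) with h | h | h
    · rw [if_pos h.le, if_neg (not_le.mpr h)]
    · simp [h]
    · rw [if_neg (not_le.mpr h), if_pos h.le]
  set ψ : Sym2 ↥(↑S : Set V) → ((_ : Fin k) × Fin k) :=
    Sym2.lift ⟨fun x y => if ι x ≤ ι y then ⟨ι y, ι x⟩ else ⟨ι x, ι y⟩, hpair⟩ with hψdef
  have hψmk : ∀ x y : ↥(↑S : Set V),
      ψ s(x, y) = if ι x ≤ ι y then (⟨ι y, ι x⟩ : (_ : Fin k) × Fin k) else ⟨ι x, ι y⟩ :=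
    fun _ _ => rfl
  have hvert : ∀ x y : ↥(↑S : Set V), ι x = ι y → x = y := by
    intro x y h
    exact Subtype.ext (by rw [← hι x, ← hι y, h])
  have hmaps : ∀ z ∈ (H.induce (↑S : Set V)).edgeSet, ψ z ∈ (↑T : Set ((_ : Fin k) × Fin k)) := by
    intro z
    induction z using Sym2.ind with
    | _ x y =>
      intro hz
      rw [SimpleGraph.mem_edgeSet] at hz
      have hadj : H.Adj ↑x ↑y := by simpa [SimpleGraph.comap_adj] using hz
      have hne : ι x ≠ ι y := fun hc => hadj.ne (by rw [← hι x, ← hι y, hc])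
      rw [Finset.mem_coe, hψmk, hT]
      rcases hne.lt_or_gt with h1 | h1
      · simp only [if_pos h1.le, Finset.mem_sigma, Finset.mem_univ, Finset.mem_filter, true_and]
        exact ⟨h1, by rw [hι x, hι y]; exact hadj⟩
      · simp only [if_neg (not_le.mpr h1), Finset.mem_sigma, Finset.mem_univ,
          Finset.mem_filter, true_and]
        exact ⟨h1, by rw [hι x, hι y]; exact hadj.symm⟩
  have hinj : Set.InjOn ψ (H.induce (↑S : Set V)).edgeSet := by
    intro z hz w hw heq
    induction z using Sym2.ind with
    | _ x y =>
      induction w using Sym2.ind with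
      | _ x' y' =>
        rw [SimpleGraph.mem_edgeSet] at hz hw
        have hadj : H.Adj ↑x ↑y := by simpa [SimpleGraph.comap_adj] using hz
        have hadj' : H.Adj ↑x' ↑y' := by simpa [SimpleGraph.comap_adj] using hw
        have hne : ι x ≠ ι y := fun hc => hadj.ne (by rw [← hι x, ← hι y, hc])
        have hne' : ι x' ≠ ι y' := fun hc => hadj'.ne (by rw [← hι x', ← hι y', hc])
        rw [hψmk, hψmk] at heq
        rcases hne.lt_or_gt with h1 | h1 <;> rcases hne'.lt_or_gt with h2 | h2
        · rw [if_pos h1.le, if_pos h2.le] at heq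
          have e1 : ι y = ι y' := congrArg Sigma.fst heq
          have e2 : ι x = ι x' := congrArg (fun p : (_ : Fin k) × Fin k => p.snd) heq
          rw [hvert x x' e2, hvert y y' e1]
        · rw [if_pos h1.le, if_neg (not_le.mpr h2)] at heq
          have e1 : ι y = ι x' := congrArg Sigma.fst heq
          have e2 : ι x = ι y' := congrArg (fun p : (_ : Fin k) × Fin k => p.snd) heq
          rw [hvert x y' e2, hvert y x' e1]
          exact Sym2.eq_swap
        · rw [if_neg (not_le.mpr h1), if_pos h2.le] at heq
          have e1 : ι x = ι y' := congrArg Sigma.fst heq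
          have e2 : ι y = ι x' := congrArg (fun p : (_ : Fin k) × Fin k => p.snd) heq
          rw [hvert x y' e1, hvert y x' e2]
          exact Sym2.eq_swap
        · rw [if_neg (not_le.mpr h1), if_neg (not_le.mpr h2)] at heq
          have e1 : ι x = ι x' := congrArg Sigma.fst heq
          have e2 : ι y = ι y' := congrArg (fun p : (_ : Fin k) × Fin k => p.snd) heq
          rw [hvert x x' e1, hvert y y' e2]
  calc (H.induce (↑S : Set V)).edgeSet.ncard
      ≤ (↑T : Set ((_ : Fin k) × Fin k)).ncard :=
        Set.ncard_le_ncard_of_injOn ψ hmaps hinj (Set.toFinite _)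
    _ = T.card := Set.ncard_coe_finset T
    _ = ∑ i : Fin k, stmt16_bdeg H f i := hsum

private lemma stmt16_count (hdeg : ∀ v, (H.neighborSet v).ncard ≤ d) (hc : 0 < c)
    (I : Finset (Fin k)) :
    ((univ : Finset (Fin k → V)).filter fun f => ∀ i ∈ I, c ≤ stmt16_bdeg H f i).card
      ≤ (k * d / c) ^ I.card * (Fintype.card V) ^ (k - I.card) := by
  classical
  set m := k * d / c with hm
  set nV := Fintype.card V with hnV
  set eV : V ≃ Fin nV := Fintype.equivFin V with heV
  set B : Finset (∀ i : Fin k, i ∈ (univ : Finset (Fin k)) → ℕ) :=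
    (univ : Finset (Fin k)).pi (fun i => Finset.range (if i ∈ I then m else nV)) with hB
  have hcardB : B.card = m ^ I.card * nV ^ (k - I.card) := by
    rw [hB, Finset.card_pi]
    calc ∏ i : Fin k, (Finset.range (if i ∈ I then m else nV)).card
        = ∏ i : Fin k, (if i ∈ I then m else nV) := by
          apply Finset.prod_congr rfl; intro i _; rw [Finset.card_range]
      _ = m ^ I.card * nV ^ (k - I.card) := by
          rw [Finset.prod_ite]
          simp [Finset.prod_const, Finset.filter_mem_eq_inter, Finset.filter_not,
            Finset.card_sdiff_of_subset (Finset.subset_univ I)]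
  rw [← hcardB]
  set Φ : (Fin k → V) → (∀ i : Fin k, i ∈ (univ : Finset (Fin k)) → ℕ) :=
    fun f => fun i _ => if i ∈ I
      then ((stmt16_pool H c f i).filter fun w => eV w < eV (f i)).card
      else (eV (f i) : ℕ) with hΦ
  apply Finset.card_le_card_of_injOn Φ
  · intro f hf
    simp only [Finset.mem_coe, Finset.mem_filter] at hf
    rw [hB, Finset.mem_coe, Finset.mem_pi]
    intro i _
    by_cases hi : i ∈ I
    · rw [hΦ]
      simp only [if_pos hi, Finset.mem_range]
      have hfp : f i ∈ stmt16_pool H c f i := stmt16_mem_pool H (hf.2 i hi)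
      have h1 : ((stmt16_pool H c f i).filter fun w => eV w < eV (f i))
          ⊆ (stmt16_pool H c f i).erase (f i) := by
        intro w hw
        rw [Finset.mem_filter] at hw
        exact Finset.mem_erase.mpr ⟨fun hwe => by simp [hwe] at hw, hw.1⟩
      calc ((stmt16_pool H c f i).filter fun w => eV w < eV (f i)).card
          ≤ ((stmt16_pool H c f i).erase (f i)).card := Finset.card_le_card h1
        _ < (stmt16_pool H c f i).card := Finset.card_erase_lt_of_mem hfp
        _ ≤ m := stmt16_pool_card_le H hdeg hc f i
    · rw [hΦ]
      simp only [if_neg hi, Finset.mem_range]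
      exact (eV (f i)).isLt
  · intro f hf g hg heq
    simp only [Finset.coe_filter, Set.mem_setOf_eq] at hf hg
    by_contra hne
    have hnonempty : (univ.filter fun i : Fin k => f i ≠ g i).Nonempty := by
      obtain ⟨i, hi⟩ := Function.ne_iff.mp hne
      exact ⟨i, Finset.mem_filter.mpr ⟨Finset.mem_univ i, hi⟩⟩
    set i₀ := (univ.filter fun i : Fin k => f i ≠ g i).min' hnonempty with hi₀
    have hmem₀ : f i₀ ≠ g i₀ :=
      (Finset.mem_filter.mp ((univ.filter fun i : Fin k => f i ≠ g i).min'_mem hnonempty)).2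
    have hprev : ∀ j, j < i₀ → f j = g j := by
      intro j hj
      by_contra hne'
      have : i₀ ≤ j := Finset.min'_le _ j (Finset.mem_filter.mpr ⟨Finset.mem_univ j, hne'⟩)
      exact absurd hj (not_lt.mpr this)
    have hpool : stmt16_pool H c f i₀ = stmt16_pool H c g i₀ := stmt16_pool_congr H hprev
    have hval := congrFun (congrFun heq i₀) (Finset.mem_univ i₀)
    rw [hΦ] at hval
    by_cases hi : i₀ ∈ I
    · simp only [if_pos hi] at hval
      rw [hpool] at hval
      exact hmem₀ (stmt16_rank_inj (fun v => eV v) (fun _ _ h => eV.injective h)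
        (stmt16_pool H c g i₀)
        (hpool ▸ stmt16_mem_pool H (hf.2 i₀ hi)) (stmt16_mem_pool H (hg.2 i₀ hi)) hval)
    · simp only [if_neg hi] at hval
      exact hmem₀ (eV.injective (Fin.val_injective hval))

private lemma stmt16_fiber (S : Finset V) (hSk : S.card = k) :
    k.factorial ≤ ((univ : Finset (Fin k → V)).filter
      fun f => Function.Injective f ∧ univ.image f = S).card := by
  classical
  have e₀ : Fin k ≃ ↥S := Fintype.equivOfCardEq (by simp [hSk, Fintype.card_coe])
  have hcard : k.factorial = (univ : Finset (Fin k ≃ ↥S)).card := by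
    rw [Finset.card_univ, Fintype.card_equiv e₀, Fintype.card_fin]
  rw [hcard]
  apply Finset.card_le_card_of_injOn (fun e : Fin k ≃ ↥S => fun i : Fin k => (↑(e i) : V))
  · intro e _
    simp only [Finset.mem_coe, Finset.mem_filter, Finset.mem_univ, true_and]
    constructor
    · intro i j hij
      exact e.injective (Subtype.ext hij)
    · ext v
      simp only [Finset.mem_image, Finset.mem_univ, true_and]
      constructor
      · rintro ⟨i, rfl⟩
        exact (e i).2
      · intro hv
        exact ⟨e.symm ⟨v, hv⟩, by simp⟩
  · intro e₁ _ e₂ _ h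
    refine Equiv.ext fun i => Subtype.ext ?_
    simpa using congrFun h i

end Stmt16Aux

set_option maxHeartbeats 2000000 in
/-- Let `H` be a graph on `n` vertices with maximum degree at most `d ≥ 1`,
and let `0 < δ ≤ a ≤ 1/2` and `k ∈ ℕ`. Then the number of `k`-element vertex subsets `S`
with `e(H[S]) ≥ a·k·d` is at most `(2e/δ²)^k · (n/k)^{k - (1-δ)·a·k}`. -/
theorem stmt16 {V : Type*} [Fintype V] {n : ℕ} (hn : Fintype.card V = n)
    (d : ℕ) (hd : 1 ≤ d) (Hg : SimpleGraph V) (hdeg : ∀ v, (Hg.neighborSet v).ncard ≤ d)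
    (δ a : ℝ) (hδ : 0 < δ) (hδa : δ ≤ a) (ha : a ≤ 1 / 2) (k : ℕ) :
    ({S : Finset V | S.card = k ∧
        a * k * d ≤ ((Hg.induce (↑S : Set V)).edgeSet.ncard : ℝ)}.ncard : ℝ) ≤
      (2 * Real.exp 1 / δ ^ 2) ^ k * ((n : ℝ) / k) ^ ((k : ℝ) - (1 - δ) * a * k) := by
  classical
  subst hn
  have ha0 : 0 < a := lt_of_lt_of_le hδ hδa
  have hd0 : (0:ℝ) < d := by exact_mod_cast Nat.lt_of_lt_of_le Nat.zero_lt_one hd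
  have hδ1 : δ ≤ 1 / 2 := le_trans hδa ha
  set family : Finset (Finset V) := univ.filter (fun S : Finset V => S.card = k ∧
      a * k * d ≤ ((Hg.induce (↑S : Set V)).edgeSet.ncard : ℝ)) with hfamdef
  have hsetfam : {S : Finset V | S.card = k ∧
      a * k * d ≤ ((Hg.induce (↑S : Set V)).edgeSet.ncard : ℝ)} = ↑family := by
    ext S; simp [hfamdef]
  rw [hsetfam, Set.ncard_coe_finset]
  rcases Nat.eq_zero_or_pos k with rfl | hk
  · have hsub : family ⊆ {∅} := by
      intro S hS
      rw [hfamdef, Finset.mem_filter] at hS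
      simp [Finset.card_eq_zero.mp hS.2.1]
    have h1 : (family.card : ℝ) ≤ 1 := by
      exact_mod_cast le_trans (Finset.card_le_card hsub) (by simp)
    calc (family.card : ℝ) ≤ 1 := h1
      _ = (2 * Real.exp 1 / δ ^ 2) ^ 0 * ((Fintype.card V : ℝ) / (0:ℕ)) ^ ((0:ℕ) - (1 - δ) * a * (0:ℕ) : ℝ) := by
          norm_num
  by_cases hkn : k ≤ Fintype.card V
  swap
  · have hempty : family = ∅ := by
      apply Finset.eq_empty_of_forall_notMem
      intro S hS
      rw [hfamdef, Finset.mem_filter] at hS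
      have := Finset.card_le_univ S
      rw [hS.2.1] at this
      omega
    rw [hempty]
    simp only [Finset.card_empty, Nat.cast_zero]
    positivity
  -- main case
  set c := ⌈a * δ * (d:ℝ)⌉₊ with hcdef
  have hc0 : 0 < c := Nat.ceil_pos.mpr (by positivity)
  set m := k * d / c with hmdef
  set F := (univ : Finset (Fin k → V)).filter
      (fun f => Function.Injective f ∧ univ.image f ∈ family) with hFdef
  -- Claim A : each good set S has at least k! injective tuples enumerating it
  have hA : family.card * k.factorial ≤ F.card := by
    have hmapsto : ∀ f ∈ F, univ.image f ∈ family := by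
      intro f hf
      rw [hFdef, Finset.mem_filter] at hf
      exact hf.2.2
    rw [Finset.card_eq_sum_card_fiberwise hmapsto]
    calc family.card * k.factorial = ∑ _S ∈ family, k.factorial := by
          rw [Finset.sum_const, smul_eq_mul]
      _ ≤ ∑ S ∈ family, (F.filter fun f => univ.image f = S).card := by
          apply Finset.sum_le_sum
          intro S hS
          have hSk : S.card = k := by
            rw [hfamdef, Finset.mem_filter] at hS
            exact hS.2.1
          refine le_trans (stmt16_fiber S hSk) (Finset.card_le_card ?_)
          intro f hf
          rw [Finset.mem_filter] at hf
          rw [Finset.mem_filter, hFdef, Finset.mem_filter]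
          exact ⟨⟨Finset.mem_univ _, hf.2.1, hf.2.2 ▸ hS⟩, hf.2.2⟩
  -- index family
  set 𝕀 := (univ : Finset (Finset (Fin k))).filter
      (fun I => (1-δ)*a*(k:ℝ) ≤ (I.card:ℝ)) with hIdef
  -- Claim B : F is covered by the union of the coded classes
  have hB : F ⊆ 𝕀.biUnion (fun I => (univ : Finset (Fin k → V)).filter
      (fun f => ∀ i ∈ I, c ≤ stmt16_bdeg Hg f i)) := by
    intro f hf
    rw [hFdef, Finset.mem_filter] at hf
    obtain ⟨-, hinj, hmem⟩ := hf
    rw [hfamdef, Finset.mem_filter] at hmem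
    obtain ⟨-, hcardS, hedge⟩ := hmem
    set If := (univ : Finset (Fin k)).filter (fun i => c ≤ stmt16_bdeg Hg f i) with hIf
    set t := If.card with htdef
    have h1 : (a*k*d : ℝ) ≤ ∑ i : Fin k, (stmt16_bdeg Hg f i : ℝ) := by
      refine le_trans hedge ?_
      have h := stmt16_edges_le Hg f hk
      calc ((Hg.induce (↑(univ.image f) : Set V)).edgeSet.ncard : ℝ)
          ≤ ((∑ i : Fin k, stmt16_bdeg Hg f i : ℕ) : ℝ) := by exact_mod_cast h
        _ = ∑ i : Fin k, (stmt16_bdeg Hg f i : ℝ) := by push_cast; rfl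
    have hcompl : ((univ.filter fun i : Fin k => ¬ c ≤ stmt16_bdeg Hg f i).card : ℝ)
        = (k:ℝ) - t := by
      have hnat : t + (univ.filter fun i : Fin k => ¬ c ≤ stmt16_bdeg Hg f i).card = k := by
        have := Finset.card_filter_add_card_filter_not
          (s := (univ : Finset (Fin k))) (p := fun i => c ≤ stmt16_bdeg Hg f i)
        simpa [htdef, hIf] using this
      have : ((univ.filter fun i : Fin k => ¬ c ≤ stmt16_bdeg Hg f i).card : ℕ) = k - t := by
        omega
      rw [this]
      have htk : t ≤ k := by omega
      push_cast [Nat.cast_sub htk]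
      ring
    have h2 : ∑ i : Fin k, (stmt16_bdeg Hg f i : ℝ) ≤ t*d + ((k:ℝ) - t)*(a*δ*d) := by
      rw [← Finset.sum_filter_add_sum_filter_not univ (fun i => c ≤ stmt16_bdeg Hg f i)
        (fun i => (stmt16_bdeg Hg f i : ℝ))]
      have hs1 : ∑ i ∈ If, (stmt16_bdeg Hg f i : ℝ) ≤ (t:ℝ) * d := by
        have := Finset.sum_le_card_nsmul If (fun i => (stmt16_bdeg Hg f i : ℝ)) d
          (fun i _ => by
            show (stmt16_bdeg Hg f i : ℝ) ≤ (d:ℝ)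
            exact_mod_cast stmt16_bdeg_le Hg hdeg hinj i)
        simpa [nsmul_eq_mul, htdef] using this
      have hs2 : ∑ i ∈ univ.filter (fun i : Fin k => ¬ c ≤ stmt16_bdeg Hg f i),
          (stmt16_bdeg Hg f i : ℝ) ≤ ((k:ℝ) - t)*(a*δ*d) := by
        rw [← hcompl]
        have hbound : ∀ i ∈ univ.filter (fun i : Fin k => ¬ c ≤ stmt16_bdeg Hg f i),
            (stmt16_bdeg Hg f i : ℝ) ≤ a*δ*d := by
          intro i hi
          have hi2 := (Finset.mem_filter.mp hi).2
          by_contra h'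
          push_neg at h'
          exact hi2 (Nat.ceil_le.mpr h'.le)
        have := Finset.sum_le_card_nsmul _ _ _ hbound
        simpa [nsmul_eq_mul] using this
      exact add_le_add hs1 hs2
    have ht : (1-δ)*a*(k:ℝ) ≤ (t:ℝ) := by
      have h3 : ((1-δ)*a*(k:ℝ))*d ≤ (t:ℝ)*d := by
        nlinarith [mul_nonneg (mul_nonneg (mul_nonneg (Nat.cast_nonneg t : (0:ℝ) ≤ t) ha0.le)
          hδ.le) hd0.le]
      exact le_of_mul_le_mul_right h3 hd0
    apply Finset.mem_biUnion.mpr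
    refine ⟨If, ?_, ?_⟩
    · rw [hIdef, Finset.mem_filter]
      exact ⟨Finset.mem_univ _, ht⟩
    · rw [Finset.mem_filter]
      exact ⟨Finset.mem_univ _, fun i hi => (Finset.mem_filter.mp hi).2⟩
  have hFS : F.card ≤ ∑ I ∈ 𝕀, ((univ : Finset (Fin k → V)).filter
      (fun f => ∀ i ∈ I, c ≤ stmt16_bdeg Hg f i)).card :=
    le_trans (Finset.card_le_card hB) Finset.card_biUnion_le
  -- real-number endgame
  have hK0 : (0:ℝ) < (k:ℝ) := by exact_mod_cast hk
  have hNK : (k:ℝ) ≤ (Fintype.card V : ℝ) := by exact_mod_cast hkn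
  set A := (Real.exp 1 / δ^2)^k * ((Fintype.card V : ℝ)/(k:ℝ)) ^ ((k:ℝ) - (1-δ)*a*(k:ℝ))
    with hAdef
  have hA0 : 0 ≤ A :=
    mul_nonneg (pow_nonneg (by positivity) k) (Real.rpow_nonneg (by positivity) _)
  have hm : (m:ℝ) ≤ (k:ℝ)/(a*δ) := by
    have h1 : (m:ℝ) ≤ ((k*d : ℕ):ℝ)/(c:ℝ) := by rw [hmdef]; exact Nat.cast_div_le
    have h2 : (a*δ*(d:ℝ)) ≤ (c:ℝ) := Nat.le_ceil _
    calc (m:ℝ) ≤ ((k*d:ℕ):ℝ)/(c:ℝ) := h1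
      _ ≤ ((k*d:ℕ):ℝ)/(a*δ*d) := by
          apply div_le_div_of_nonneg_left (by positivity) (by positivity) h2
      _ = (k:ℝ)/(a*δ) := by
          push_cast
          field_simp
  have hper : ∀ I ∈ 𝕀, (((univ : Finset (Fin k → V)).filter
      (fun f => ∀ i ∈ I, c ≤ stmt16_bdeg Hg f i)).card : ℝ) ≤ (k.factorial : ℝ) * A := by
    intro I hI
    rw [hIdef, Finset.mem_filter] at hI
    have hτt : (1-δ)*a*(k:ℝ) ≤ (I.card:ℝ) := hI.2
    set t := I.card with htdef
    have htk : t ≤ k := by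
      rw [htdef]
      exact le_trans (Finset.card_le_card (Finset.subset_univ I)) (by simp)
    have hcount' : (((univ : Finset (Fin k → V)).filter
        (fun f => ∀ i ∈ I, c ≤ stmt16_bdeg Hg f i)).card : ℝ)
        ≤ (m:ℝ)^t * ((Fintype.card V : ℝ))^(k-t) := by
      exact_mod_cast stmt16_count Hg hdeg hc0 I
    have e1 : (1/(a*δ))^t ≤ (1/δ^2)^t := by
      apply pow_le_pow_left₀ (by positivity)
      apply one_div_le_one_div_of_le (by positivity)
      nlinarith
    have e2 : (1/δ^2)^t ≤ (1/δ^2)^k := by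
      apply pow_le_pow_right₀ ?_ htk
      rw [le_div_iff₀ (by positivity), one_mul]
      nlinarith
    calc (((univ : Finset (Fin k → V)).filter
        (fun f => ∀ i ∈ I, c ≤ stmt16_bdeg Hg f i)).card : ℝ)
        ≤ (m:ℝ)^t * ((Fintype.card V : ℝ))^(k-t) := hcount'
      _ ≤ ((k:ℝ)/(a*δ))^t * ((Fintype.card V : ℝ))^(k-t) := by
          apply mul_le_mul_of_nonneg_right (pow_le_pow_left₀ (by positivity) hm t) (by positivity)
      _ = (k:ℝ)^t * ((Fintype.card V : ℝ))^(k-t) * (1/(a*δ))^t := by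
          rw [div_pow]
          ring
      _ ≤ (k:ℝ)^t * ((Fintype.card V : ℝ))^(k-t) * (1/δ^2)^k := by
          apply mul_le_mul_of_nonneg_left (e1.trans e2) (by positivity)
      _ = (k:ℝ)^k * (((Fintype.card V : ℝ))/(k:ℝ))^(k-t) * (1/δ^2)^k := by
          have hkk : (k:ℝ)^k = (k:ℝ)^t * (k:ℝ)^(k-t) := by
            rw [← pow_add, Nat.add_sub_cancel' htk]
          rw [div_pow, hkk]
          field_simp
          ring
          rw [mul_assoc, ← mul_pow, mul_inv_cancel₀ hK0.ne', one_pow, mul_one]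
      _ ≤ (k:ℝ)^k * (((Fintype.card V : ℝ))/(k:ℝ)) ^ ((k:ℝ) - (1-δ)*a*(k:ℝ)) * (1/δ^2)^k := by
          have hbase : (1:ℝ) ≤ (Fintype.card V : ℝ)/(k:ℝ) := (one_le_div hK0).mpr hNK
          have hnk : (((Fintype.card V : ℝ))/(k:ℝ))^(k-t)
              = (((Fintype.card V : ℝ))/(k:ℝ)) ^ (((k-t:ℕ)):ℝ) := (Real.rpow_natCast _ _).symm
          have hexp : (((k-t:ℕ)):ℝ) ≤ (k:ℝ) - (1-δ)*a*(k:ℝ) := by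
            rw [Nat.cast_sub htk]
            linarith
          rw [hnk]
          apply mul_le_mul_of_nonneg_right ?_ (by positivity)
          apply mul_le_mul_of_nonneg_left (Real.rpow_le_rpow_of_exponent_le hbase hexp)
            (by positivity)
      _ ≤ ((k.factorial:ℝ) * Real.exp 1 ^ k)
            * (((Fintype.card V : ℝ))/(k:ℝ)) ^ ((k:ℝ) - (1-δ)*a*(k:ℝ)) * (1/δ^2)^k := by
          apply mul_le_mul_of_nonneg_right (mul_le_mul_of_nonneg_right (stmt16_pow_le_fact k)
            (Real.rpow_nonneg (by positivity) _)) (by positivity)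
      _ = (k.factorial:ℝ) * A := by
          rw [hAdef]
          have hsplit : (Real.exp 1/δ^2)^k = Real.exp 1^k * (1/δ^2)^k := by
            rw [div_eq_mul_one_div, mul_pow]
          rw [hsplit]
          ring
  have hIcard : ((𝕀.card):ℝ) ≤ (2:ℝ)^k := by
    have h1 : 𝕀.card ≤ 2^k := by
      rw [hIdef]
      refine le_trans (Finset.card_filter_le _ _) ?_
      rw [Finset.card_univ, Fintype.card_finset, Fintype.card_fin]
    exact_mod_cast h1
  have hsum : (∑ I ∈ 𝕀, (((univ : Finset (Fin k → V)).filter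
      (fun f => ∀ i ∈ I, c ≤ stmt16_bdeg Hg f i)).card : ℝ)) ≤ (2:ℝ)^k * ((k.factorial:ℝ) * A) := by
    calc ∑ I ∈ 𝕀, (((univ : Finset (Fin k → V)).filter
        (fun f => ∀ i ∈ I, c ≤ stmt16_bdeg Hg f i)).card : ℝ)
        ≤ ∑ _I ∈ 𝕀, (k.factorial:ℝ)*A := Finset.sum_le_sum hper
      _ = (𝕀.card : ℝ) * ((k.factorial:ℝ)*A) := by rw [Finset.sum_const, nsmul_eq_mul]
      _ ≤ (2:ℝ)^k * ((k.factorial:ℝ)*A) := by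
          apply mul_le_mul_of_nonneg_right hIcard
            (mul_nonneg (Nat.cast_nonneg _) hA0)
  have hmain : (family.card : ℝ) * (k.factorial:ℝ) ≤ (2:ℝ)^k * ((k.factorial:ℝ) * A) := by
    calc (family.card : ℝ)*(k.factorial:ℝ) ≤ (F.card:ℝ) := by exact_mod_cast hA
      _ ≤ ∑ I ∈ 𝕀, (((univ : Finset (Fin k → V)).filter
          (fun f => ∀ i ∈ I, c ≤ stmt16_bdeg Hg f i)).card : ℝ) := by exact_mod_cast hFS
      _ ≤ (2:ℝ)^k * ((k.factorial:ℝ)*A) := hsum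
  have hfacpos : (0:ℝ) < (k.factorial:ℝ) := by exact_mod_cast k.factorial_pos
  have hfin : (family.card:ℝ) ≤ (2:ℝ)^k * A := by
    have h' : (family.card : ℝ)*(k.factorial:ℝ) ≤ ((2:ℝ)^k*A)*(k.factorial:ℝ) := by
      calc (family.card : ℝ)*(k.factorial:ℝ) ≤ (2:ℝ)^k * ((k.factorial:ℝ)*A) := hmain
        _ = ((2:ℝ)^k*A)*(k.factorial:ℝ) := by ring
    exact le_of_mul_le_mul_right h' hfacpos
  calc (family.card:ℝ) ≤ (2:ℝ)^k*A := hfin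
    _ = (2*Real.exp 1/δ^2)^k * ((Fintype.card V:ℝ)/(k:ℝ)) ^ ((k:ℝ) - (1-δ)*a*(k:ℝ)) := by
        rw [hAdef]
        have hsplit2 : (2*Real.exp 1/δ^2)^k = 2^k*(Real.exp 1/δ^2)^k := by
          rw [mul_div_assoc, mul_pow]
        rw [hsplit2]
        ring
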